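/- Suppose x is a nonempty binary word, y is an overlap-free binary word, and a, b are letters such that a·x·x·b = μ(y). Then x ∈ {0, 1, 010, 101}. -/

import Mathlib

/-- Thue–Morse morphism: μ(0)=01, μ(1)=10, encoding 0 = false, 1 = true. -/
def mu (w : List Bool) : List Bool := w.flatMap fun b => [b, !b]

/-- A word is an overlap if it has the form a·x·a·x·a for a letter a. -/
def IsOverlap (w : List Bool) : Prop :=
  ∃ (a : Bool) (x : List Bool), w = [a] ++ x ++ [a] ++ x ++ [a]

/-- A word contains an overlap as a factor. -/
def HasOverlap (w : List Bool) : Prop := ∃ f, f <:+: w ∧ IsOverlap f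

/-- A word is overlap-free if no factor is an overlap. -/
def OverlapFree (w : List Bool) : Prop := ∀ f, f <:+: w → ¬ IsOverlap f

lemma mu_cons (c : Bool) (t : List Bool) : mu (c :: t) = c :: (!c) :: mu t := rfl

lemma mu_length (y : List Bool) : (mu y).length = 2 * y.length := by
  induction y with
  | nil => rfl
  | cons c t ih => rw [mu_cons]; simp only [List.length_cons] at ih ⊢; omega

lemma mu_getD (y : List Bool) (j : ℕ) (hj : j < 2 * y.length) :
    (mu y).getD j false =
      if j % 2 = 0 then y.getD (j / 2) false else !(y.getD (j / 2) false) := by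
  induction y generalizing j with
  | nil => simp at hj
  | cons c t ih =>
    match j with
    | 0 => simp [mu_cons]
    | 1 => simp [mu_cons]
    | (j+2) =>
      have e1 : (j+2) % 2 = j % 2 := by omega
      have e2 : (j+2) / 2 = j / 2 + 1 := by omega
      rw [mu_cons, List.getD_cons_succ, List.getD_cons_succ, e1, e2,
        List.getD_cons_succ]
      exact ih j (by simp only [List.length_cons] at hj; omega)

/-- A word of odd length 2p+1 with period p is an overlap. -/
lemma overlap_of_period (w : List Bool) (p : ℕ) (hp : 1 ≤ p) (hl : w.length = 2*p+1)
    (hper : ∀ k, k + p < w.length → w.getD (k+p) false = w.getD k false) :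
    IsOverlap w := by
  refine ⟨w.getD 0 false, (w.take p).drop 1, ?_⟩
  have h1 : w.take p = [w.getD 0 false] ++ (w.take p).drop 1 := by
    cases w with
    | nil => simp at hl
    | cons c t =>
      cases p with
      | zero => omega
      | succ q => simp
  have h2 : w.drop p = w.take (p+1) := by
    apply List.ext_getElem
    · simp; omega
    · intro i hi1 hi2
      rw [List.getElem_drop, List.getElem_take]
      have hip : i + p < w.length := by simp at hi1; omega
      have hh := hper i hip
      rw [List.getD_eq_getElem _ _ (by omega), List.getD_eq_getElem _ _ (by omega)] at hh
      simpa [Nat.add_comm] using hh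
  have h4 : w.getD p false = w.getD 0 false := by
    have := hper 0 (by omega); simpa using this
  have h3 : w.take (p+1) = w.take p ++ [w.getD 0 false] := by
    rw [List.take_succ, List.getElem?_eq_getElem (by omega)]
    rw [← h4, List.getD_eq_getElem _ _ (show p < w.length by omega)]
    rfl
  conv_lhs => rw [← List.take_append_drop p w, h2, h3, h1]
  simp

theorem stmt_6 (x y : List Bool) (a b : Bool) (hx : x ≠ [])
    (hy : OverlapFree y) (h : [a] ++ x ++ x ++ [b] = mu y) :
    x ∈ [[false], [true], [false, true, false], [true, false, true]] := by
  have hn : 1 ≤ x.length := List.length_pos_iff.mpr hx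
  have hm : y.length = x.length + 1 := by
    have := congrArg List.length h
    rw [mu_length] at this
    simp at this
    omega
  -- occurrences of x inside mu y
  have hxi : ∀ i, i < x.length → (mu y).getD (1+i) false = x.getD i false := by
    intro i hi
    rw [← h, show [a] ++ x ++ x ++ [b] = a :: (x ++ (x ++ [b])) by simp,
      show 1+i = i+1 by omega, List.getD_cons_succ, List.getD_append _ _ _ i hi]
  have hxi2 : ∀ i, i < x.length →
      (mu y).getD (1+x.length+i) false = x.getD i false := by
    intro i hi
    rw [← h, show [a] ++ x ++ x ++ [b] = a :: (x ++ (x ++ [b])) by simp,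
      show 1+x.length+i = (x.length+i)+1 by omega, List.getD_cons_succ,
      List.getD_append_right _ _ _ _ (by omega : x.length ≤ x.length + i),
      show x.length + i - x.length = i by omega, List.getD_append _ _ _ i hi]
  have key : ∀ j, 1 ≤ j → j ≤ x.length →
      (mu y).getD j false = (mu y).getD (x.length + j) false := by
    intro j h1 h2
    have a1 := hxi (j-1) (by omega)
    have a2 := hxi2 (j-1) (by omega)
    rw [show 1+(j-1) = j by omega] at a1
    rw [show 1+x.length+(j-1) = x.length+j by omega] at a2
    rw [a1, a2]
  rcases Nat.even_or_odd x.length with ⟨p, hpn⟩ | ⟨q, hqn⟩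
  · -- even length: y itself is an overlap, contradiction
    exfalso
    have hp : 1 ≤ p := by omega
    have per0 : y.getD p false = y.getD 0 false := by
      have hj := key 1 (by omega) (by omega)
      rw [mu_getD y 1 (by omega), mu_getD y (x.length+1) (by omega),
        if_neg (by omega), if_neg (by omega),
        show (1:ℕ)/2 = 0 by norm_num, show (x.length+1)/2 = p by omega] at hj
      exact (Bool.not_inj hj).symm
    have per : ∀ k, k + p < y.length → y.getD (k+p) false = y.getD k false := by
      intro k hk
      rcases Nat.eq_zero_or_pos k with h0 | h1
      · subst h0; simpa using per0
      · have hj := key (2*k) (by omega) (by omega)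
        rw [mu_getD y (2*k) (by omega), mu_getD y (x.length+2*k) (by omega),
          if_pos (by omega), if_pos (by omega),
          show 2*k/2 = k by omega, show (x.length+2*k)/2 = k + p by omega] at hj
        exact hj.symm
    exact hy y (List.infix_refl y) (overlap_of_period y p hp (by omega) per)
  · -- odd length: x.length = 2q+1
    have famA : ∀ k, k ≤ q → y.getD (q+1+k) false = !(y.getD k false) := by
      intro k hk
      have hj := key (2*k+1) (by omega) (by omega)
      rw [mu_getD y (2*k+1) (by omega), mu_getD y (x.length+(2*k+1)) (by omega),
        if_neg (by omega), if_pos (by omega),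
        show (2*k+1)/2 = k by omega,
        show (x.length+(2*k+1))/2 = q+1+k by omega] at hj
      exact hj.symm
    have famB : ∀ k, 1 ≤ k → k ≤ q → y.getD k false = !(y.getD (q+k) false) := by
      intro k h1 h2
      have hj := key (2*k) (by omega) (by omega)
      rw [mu_getD y (2*k) (by omega), mu_getD y (x.length+2*k) (by omega),
        if_pos (by omega), if_neg (by omega),
        show 2*k/2 = k by omega,
        show (x.length+2*k)/2 = q+k by omega] at hj
      exact hj
    have const : ∀ k, k ≤ q → y.getD (q+1+k) false = y.getD (q+1) false := by
      intro k
      induction k with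
      | zero => intro _; rfl
      | succ k ih =>
        intro hk
        have hA := famA (k+1) hk
        have hB := famB (k+1) (by omega) hk
        rw [show q+(k+1) = q+1+k by omega] at hB
        rw [hA, hB, Bool.not_not]
        exact ih (by omega)
    rcases (by omega : q = 0 ∨ q = 1 ∨ 2 ≤ q) with hq0 | hq1 | hq2
    · -- x.length = 1
      subst hq0
      obtain ⟨c, hc⟩ := List.length_eq_one_iff.mp (show x.length = 1 by omega)
      subst hc
      have h1 := hxi 0 (by omega)
      rw [mu_getD y 1 (by omega), if_neg (by omega),
        show (1:ℕ)/2 = 0 by norm_num] at h1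
      simp only [List.getD_cons_zero] at h1
      rw [← h1]
      cases hb : y.getD 0 false <;> decide
    · -- x.length = 3
      subst hq1
      obtain ⟨c0, c1, c2, hc⟩ := List.length_eq_three.mp (show x.length = 3 by omega)
      have h1 := hxi 0 (by omega)
      have h2 := hxi 1 (by omega)
      have h3 := hxi 2 (by omega)
      rw [mu_getD y 1 (by omega), if_neg (by omega), show (1:ℕ)/2 = 0 by norm_num] at h1
      rw [mu_getD y 2 (by omega), if_pos (by omega), show (2:ℕ)/2 = 1 by norm_num] at h2
      rw [mu_getD y 3 (by omega), if_neg (by omega), show (3:ℕ)/2 = 1 by norm_num] at h3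
      have ht2 : y.getD 2 false = !(y.getD 0 false) := by
        have := famA 0 (by omega); simpa using this
      have ht1 : y.getD 1 false = y.getD 0 false := by
        have := famB 1 (by omega) (by omega)
        rw [show 1+1 = 2 by omega, ht2, Bool.not_not] at this
        exact this
      rw [hc] at h1 h2 h3
      simp only [List.getD_cons_zero, List.getD_cons_succ] at h1 h2 h3
      rw [hc, ← h1, ← h2, ← h3, ht1]
      cases hb : y.getD 0 false <;> decide
    · -- q ≥ 2 : [c,c,c] is a factor of y, contradiction
      exfalso
      have hf : (y.drop (q+1)).take 3 =
          [y.getD (q+1) false, y.getD (q+1) false, y.getD (q+1) false] := by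
        apply List.ext_getElem
        · simp; omega
        · intro i hi1 hi2
          have h3 : i < 3 := by simpa using hi2
          rw [List.getElem_take, List.getElem_drop]
          have hc := const i (by omega)
          rw [List.getD_eq_getElem _ _ (by omega)] at hc
          rw [hc]
          have hgd : y.getD (q+1) false = y[q+1]'(by omega) :=
            List.getD_eq_getElem _ _ _
          rw [hgd]
          interval_cases i <;> rfl
      have hinf : (y.drop (q+1)).take 3 <:+: y :=
        (List.take_prefix 3 (y.drop (q+1))).isInfix.trans
          (List.drop_suffix (q+1) y).isInfix
      exact hy _ hinf ⟨y.getD (q+1) false, [], by rw [hf]; rfl⟩
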